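/- In a right-angled Artin group A(Γ), for every element g, any two reduced words representing g have the same support (set of generators occurring in the word). -/
import Mathlib


/-- The commutation relations defining the right-angled Artin group of a graph `Γ`. -/
def raagRels {V : Type*} (Γ : SimpleGraph V) : Set (FreeGroup V) :=
  {w | ∃ u v : V, Γ.Adj u v ∧
    w = FreeGroup.of u * FreeGroup.of v * (FreeGroup.of u)⁻¹ * (FreeGroup.of v)⁻¹}

/-- The right-angled Artin group `A(Γ)` of a graph `Γ`. -/
abbrev Raag {V : Type*} (Γ : SimpleGraph V) := PresentedGroup (raagRels Γ)

/-- The canonical projection from the free group to `A(Γ)`. -/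
def raagProj {V : Type*} (Γ : SimpleGraph V) : FreeGroup V →* Raag Γ :=
  PresentedGroup.mk (raagRels Γ)

/-- The support of a word: the set of generators appearing in it. -/
def wordSupp {V : Type*} (w : List (V × Bool)) : Set V := {v | ∃ b : Bool, (v, b) ∈ w}

/-- A word is reduced (for `A(Γ)`) if it has minimal length among all words representing the same
element of `A(Γ)`. -/
def IsReducedWord {V : Type*} (Γ : SimpleGraph V) (w : List (V × Bool)) : Prop :=
  ∀ w' : List (V × Bool),
    raagProj Γ (FreeGroup.mk w') = raagProj Γ (FreeGroup.mk w) → w.length ≤ w'.length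

section Aux

open Classical in
/-- The retraction of `A(Γ)` killing generators outside `S`. -/
noncomputable def raagRetr {V : Type*} (Γ : SimpleGraph V) (S : Set V) : Raag Γ →* Raag Γ :=
  PresentedGroup.toGroup (f := fun v => if v ∈ S then (PresentedGroup.of v : Raag Γ) else 1)
    (by
      rintro r ⟨u, v, hadj, rfl⟩
      simp only [map_mul, map_inv, FreeGroup.lift_apply_of]
      by_cases hu : u ∈ S <;> by_cases hv : v ∈ S <;> simp [hu, hv]
      have : raagProj Γ (FreeGroup.of u * FreeGroup.of v * (FreeGroup.of u)⁻¹ *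
          (FreeGroup.of v)⁻¹) = 1 := by
        apply (QuotientGroup.eq_one_iff _).2
        exact Subgroup.subset_normalClosure ⟨u, v, hadj, rfl⟩
      simpa [raagProj, PresentedGroup.mk, PresentedGroup.of, map_mul, map_inv,
        mul_inv_eq_one, mul_inv_eq_iff_eq_mul] using this)

open Classical in
lemma raagRetr_mk {V : Type*} (Γ : SimpleGraph V) (S : Set V) (w : List (V × Bool)) :
    raagRetr Γ S (raagProj Γ (FreeGroup.mk w)) =
      raagProj Γ (FreeGroup.mk (w.filter (fun p => decide (p.1 ∈ S)))) := by
  induction w with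
  | nil => simp only [List.filter_nil]; rw [show (FreeGroup.mk [] : FreeGroup V) = 1 from rfl, map_one, map_one]
  | cons a t ih =>
    obtain ⟨x, b⟩ := a
    have hsplit : FreeGroup.mk ((x, b) :: t) = FreeGroup.mk [(x, b)] * FreeGroup.mk t := by
      rw [FreeGroup.mul_mk]; rfl
    have hone : (FreeGroup.mk [(x, true)] : FreeGroup V) = FreeGroup.of x := rfl
    have hinv : (FreeGroup.mk [(x, false)] : FreeGroup V) = (FreeGroup.of x)⁻¹ := by
      rw [← hone, FreeGroup.inv_mk]; rfl
    have hofx : raagRetr Γ S (raagProj Γ (FreeGroup.of x)) =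
        if x ∈ S then raagProj Γ (FreeGroup.of x) else 1 := by
      have h1 : raagProj Γ (FreeGroup.of x) = PresentedGroup.of x := rfl
      rw [h1, raagRetr, PresentedGroup.toGroup.of]
    by_cases hx : x ∈ S
    · have : FreeGroup.mk (((x, b) :: t).filter (fun p => decide (p.1 ∈ S)))
          = FreeGroup.mk [(x, b)] * FreeGroup.mk (t.filter (fun p => decide (p.1 ∈ S))) := by
        rw [FreeGroup.mul_mk]
        simp [List.filter_cons, hx]
      rw [hsplit, this, map_mul, map_mul, map_mul, ih]
      congr 1
      cases b
      · rw [hinv, map_inv, map_inv, hofx, if_pos hx]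
      · rw [hone, hofx, if_pos hx]
    · have : (((x, b) :: t).filter (fun p => decide (p.1 ∈ S)))
          = (t.filter (fun p => decide (p.1 ∈ S))) := by
        simp [List.filter_cons, hx]
      rw [hsplit, this, map_mul, map_mul, ih]
      have hz : raagRetr Γ S (raagProj Γ (FreeGroup.mk [(x, b)])) = 1 := by
        cases b
        · rw [hinv, map_inv, map_inv, hofx, if_neg hx, inv_one]
        · rw [hone, hofx, if_neg hx]
      rw [hz, one_mul]

open Classical in
lemma wordSupp_subset {V : Type*} (Γ : SimpleGraph V)
    (w₁ w₂ : List (V × Bool)) (h₁ : IsReducedWord Γ w₁)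
    (heq : raagProj Γ (FreeGroup.mk w₁) = raagProj Γ (FreeGroup.mk w₂)) :
    wordSupp w₁ ⊆ wordSupp w₂ := by
  intro v hv
  by_contra hvS
  set S := wordSupp w₂ with hS
  have hfix : (w₂.filter (fun p => decide (p.1 ∈ S))) = w₂ := by
    apply List.filter_eq_self.2
    rintro ⟨x, b⟩ hxb
    simpa using ⟨b, hxb⟩
  have key : raagProj Γ (FreeGroup.mk (w₁.filter (fun p => decide (p.1 ∈ S))))
      = raagProj Γ (FreeGroup.mk w₁) := by
    rw [← raagRetr_mk, heq, raagRetr_mk, hfix, ← heq]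
  have hlen := h₁ _ key
  obtain ⟨b, hb⟩ := hv
  have hlt : (w₁.filter (fun p => decide (p.1 ∈ S))).length < w₁.length := by
    apply List.length_filter_lt_length_iff_exists.2
    exact ⟨(v, b), hb, by simpa using hvS⟩
  omega

end Aux

/-- In a right-angled Artin group, any two reduced words representing the same element have the
same support. -/
theorem stmt8 {V : Type*} (Γ : SimpleGraph V)
    (w₁ w₂ : List (V × Bool)) (h₁ : IsReducedWord Γ w₁) (h₂ : IsReducedWord Γ w₂)
    (heq : raagProj Γ (FreeGroup.mk w₁) = raagProj Γ (FreeGroup.mk w₂)) :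
    wordSupp w₁ = wordSupp w₂ := by
  exact le_antisymm (wordSupp_subset Γ w₁ w₂ h₁ heq) (wordSupp_subset Γ w₂ w₁ h₂ heq.symm)
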